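/- The function φ(t) = 1/(1 − e^{−t}) − 1/t is strictly increasing on (0, ∞). -/

import Mathlib

open Real

theorem phi_strictMonoOn :
    StrictMonoOn (fun t : ℝ => 1 / (1 - Real.exp (-t)) - 1 / t) (Set.Ioi 0) := by
  have hden : ∀ t : ℝ, 0 < t → 0 < 1 - Real.exp (-t) := by
    intro t ht
    have : Real.exp (-t) < 1 := Real.exp_lt_one_iff.mpr (by linarith)
    linarith
  have hderiv : ∀ t : ℝ, 0 < t →
      HasDerivAt (fun t : ℝ => 1 / (1 - Real.exp (-t)) - 1 / t)
        (1 / t ^ 2 - Real.exp (-t) / (1 - Real.exp (-t)) ^ 2) t := by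
    intro t ht
    have hne : (1 - Real.exp (-t)) ≠ 0 := ne_of_gt (hden t ht)
    have h1 : HasDerivAt (fun t : ℝ => 1 - Real.exp (-t)) (Real.exp (-t)) t := by
      have := ((Real.hasDerivAt_exp (-t)).comp t (hasDerivAt_neg t)).const_sub 1
      simpa using this
    have h2 : HasDerivAt (fun t : ℝ => (1 - Real.exp (-t))⁻¹)
        (-(Real.exp (-t)) / (1 - Real.exp (-t)) ^ 2) t := h1.inv hne
    have h3 : HasDerivAt (fun t : ℝ => t⁻¹) (-(t ^ 2)⁻¹) t :=
      hasDerivAt_inv (ne_of_gt ht)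
    have : HasDerivAt (fun t : ℝ => (1 - Real.exp (-t))⁻¹ - t⁻¹)
        (-(Real.exp (-t)) / (1 - Real.exp (-t)) ^ 2 - -(t ^ 2)⁻¹) t := h2.sub h3
    simp only [one_div]
    convert this using 1
    ring
  have hpos : ∀ t : ℝ, 0 < t →
      0 < 1 / t ^ 2 - Real.exp (-t) / (1 - Real.exp (-t)) ^ 2 := by
    intro t ht
    have hs : t / 2 < Real.sinh (t / 2) := Real.self_lt_sinh_iff.mpr (by linarith)
    rw [Real.sinh_eq] at hs
    have ha : Real.exp (-(t/2)) * Real.exp (t/2) = 1 := by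
      rw [← Real.exp_add]; simp
    have ha2 : Real.exp (-(t/2)) ^ 2 = Real.exp (-t) := by
      rw [sq, ← Real.exp_add]; congr 1; ring
    have hapos := Real.exp_pos (-(t/2))
    have key : Real.exp (-t) * t ^ 2 < (1 - Real.exp (-t)) ^ 2 := by
      have h1 : t * Real.exp (-(t/2)) < 1 - Real.exp (-t) := by
        nlinarith
      have h0 : 0 ≤ t * Real.exp (-(t/2)) := le_of_lt (mul_pos ht hapos)
      have h2 : (t * Real.exp (-(t/2))) ^ 2 < (1 - Real.exp (-t)) ^ 2 :=
        pow_lt_pow_left₀ h1 h0 (by norm_num)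
      nlinarith [h2]
    rw [sub_pos, div_lt_div_iff₀ (pow_pos (hden t ht) 2) (pow_pos ht 2)]
    nlinarith
  apply strictMonoOn_of_deriv_pos (convex_Ioi 0)
  · intro t ht
    exact ((hderiv t ht).sub_const 0).continuousAt.continuousWithinAt |>.congr
      (fun x _ => by ring_nf) (by ring_nf) |>.mono (by intro x hx; exact hx) |>.mono le_rfl
  · intro t ht
    rw [interior_Ioi] at ht
    rw [(hderiv t ht).deriv]
    exact hpos t ht
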